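/- arXiv:1010.5691 — 4 statements merged into one kernel-verified Lean document; each statement's English description precedes it below -/
import Mathlib

section
/- Every local maximum of the function Mag(θ) = |∑_{i=1}^N a_i e^{jθ_i}| (with all a_i > 0) is a global maximum; that is, if θ* is a local maximizer of Mag then Mag(θ*) = ∑ a_i. -/
noncomputable def Mag {N : ℕ} (a θ : Fin N → ℝ) : ℝ :=
  ‖∑ i, (a i : ℂ) * Complex.exp ((θ i : ℂ) * Complex.I)‖

private lemma aux_cos_sin (u v : ℝ)
    (h : IsLocalMax (fun t : ℝ => u * Real.cos t - v * Real.sin t) 0) :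
    v = 0 ∧ 0 ≤ u := by
  have hd : HasDerivAt (fun t : ℝ => u * Real.cos t - v * Real.sin t)
      (u * (-Real.sin 0) - v * Real.cos 0) 0 :=
    ((Real.hasDerivAt_cos 0).const_mul u).sub ((Real.hasDerivAt_sin 0).const_mul v)
  have hv : v = 0 := by
    have := h.hasDerivAt_eq_zero hd
    simpa using this
  refine ⟨hv, ?_⟩
  by_contra hu
  push_neg at hu
  obtain ⟨δ, hδ, hb⟩ := Metric.eventually_nhds_iff.mp h
  set t : ℝ := min (δ / 2) 1 with ht
  have ht0 : 0 < t := lt_min (by linarith) one_pos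
  have htδ : t < δ := lt_of_le_of_lt (min_le_left _ _) (by linarith)
  have htπ : t ≤ Real.pi :=
    le_trans (min_le_right _ _) (by linarith [Real.pi_gt_three])
  have hcos : Real.cos t < 1 := by
    have := Real.cos_lt_cos_of_nonneg_of_le_pi le_rfl htπ ht0
    simpa using this
  have hbt := hb (show dist t 0 < δ by simpa [Real.dist_eq, abs_of_pos ht0] using htδ)
  simp only [hv, zero_mul, sub_zero, Real.cos_zero, Real.sin_zero, mul_one] at hbt
  nlinarith

theorem mag_local_max_is_global {N : ℕ} (hN : 1 ≤ N) (a : Fin N → ℝ)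
    (ha : ∀ i, 0 < a i) (θstar : Fin N → ℝ)
    (hloc : ∃ ε > 0, ∀ θ : Fin N → ℝ, ‖θ - θstar‖ < ε → Mag a θ ≤ Mag a θstar) :
    Mag a θstar = ∑ i, a i := by
  obtain ⟨ε, hε, hloc⟩ := hloc
  set S : ℂ := ∑ i, (a i : ℂ) * Complex.exp ((θstar i : ℂ) * Complex.I) with hS
  have key : ∀ i, ((starRingEnd ℂ) S * Complex.exp ((θstar i : ℂ) * Complex.I)).im = 0 ∧
      0 < ((starRingEnd ℂ) S * Complex.exp ((θstar i : ℂ) * Complex.I)).re := by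
    intro i
    set B : ℂ := ∑ j ∈ Finset.univ.erase i, (a j : ℂ) * Complex.exp ((θstar j : ℂ) * Complex.I)
      with hB
    have hSB : S = (a i : ℂ) * Complex.exp ((θstar i : ℂ) * Complex.I) + B :=
      (Finset.add_sum_erase _ _ (Finset.mem_univ i)).symm
    set w : ℂ := (a i : ℂ) * Complex.exp ((θstar i : ℂ) * Complex.I) * (starRingEnd ℂ) B with hw
    -- Mag of the perturbed phase vector
    have hmag : ∀ x : ℝ, Mag a (Function.update θstar i x)
        = ‖(a i : ℂ) * Complex.exp ((x : ℂ) * Complex.I) + B‖ := by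
      intro x
      unfold Mag
      congr 1
      rw [← Finset.add_sum_erase _ _ (Finset.mem_univ i)]
      congr 1
      · simp
      · refine Finset.sum_congr rfl fun j hj => ?_
        rw [Function.update_of_ne (Finset.ne_of_mem_erase hj)]
    -- the perturbation stays in the ε-ball
    have hclose : ∀ t : ℝ, |t| < ε →
        ‖Function.update θstar i (θstar i + t) - θstar‖ < ε := by
      intro t htε
      rw [pi_norm_lt_iff hε]
      intro j
      by_cases hji : j = i
      · subst hji; simpa [Function.update_self] using htε
      · simp [Function.update_of_ne hji, hε]
    -- local max of the trigonometric function
    have hlocmax : IsLocalMax (fun t : ℝ => w.re * Real.cos t - w.im * Real.sin t) 0 := by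
      rw [IsLocalMax, IsMaxFilter, Metric.eventually_nhds_iff]
      refine ⟨ε, hε, fun t htd => ?_⟩
      have htε : |t| < ε := by simpa [Real.dist_eq] using htd
      have h1 : Mag a (Function.update θstar i (θstar i + t)) ≤ Mag a θstar :=
        hloc _ (hclose t htε)
      rw [hmag] at h1
      have h0 : Mag a θstar = ‖(a i : ℂ) *
          Complex.exp ((θstar i : ℂ) * Complex.I) + B‖ := by
        unfold Mag; rw [← hS, hSB]
      rw [h0] at h1
      -- square the inequality
      have hsq : Complex.normSq ((a i : ℂ) * Complex.exp (((θstar i + t : ℝ) : ℂ) * Complex.I) + B)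
          ≤ Complex.normSq ((a i : ℂ) * Complex.exp ((θstar i : ℂ) * Complex.I) + B) := by
        rw [← Complex.sq_norm, ← Complex.sq_norm]
        exact pow_le_pow_left₀ (norm_nonneg _) h1 2
      rw [Complex.normSq_add, Complex.normSq_add] at hsq
      have hexp : (a i : ℂ) * Complex.exp (((θstar i + t : ℝ) : ℂ) * Complex.I)
          = (a i : ℂ) * Complex.exp ((θstar i : ℂ) * Complex.I) * Complex.exp ((t : ℂ) * Complex.I) := by
        rw [mul_assoc, ← Complex.exp_add]
        push_cast
        ring_nf
      rw [hexp] at hsq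
      have hns1 : Complex.normSq ((a i : ℂ) * Complex.exp ((θstar i : ℂ) * Complex.I)
          * Complex.exp ((t : ℂ) * Complex.I))
          = Complex.normSq ((a i : ℂ) * Complex.exp ((θstar i : ℂ) * Complex.I)) := by
        rw [Complex.normSq_mul]
        have : Complex.normSq (Complex.exp ((t : ℂ) * Complex.I)) = 1 := by
          rw [← Complex.sq_norm, Complex.norm_exp_ofReal_mul_I]; norm_num
        rw [this, mul_one]
      rw [hns1] at hsq
      have hre : ((a i : ℂ) * Complex.exp ((θstar i : ℂ) * Complex.I) * Complex.exp ((t : ℂ) * Complex.I)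
          * (starRingEnd ℂ) B).re = w.re * Real.cos t - w.im * Real.sin t := by
        rw [mul_right_comm, ← hw, Complex.exp_mul_I, ← Complex.ofReal_cos, ← Complex.ofReal_sin]
        simp [Complex.mul_re, Complex.mul_im, Complex.cos_ofReal_re, Complex.sin_ofReal_re]
      rw [hre] at hsq
      simp only [Real.cos_zero, Real.sin_zero, mul_one, mul_zero, sub_zero]
      linarith
    obtain ⟨him, hre⟩ := aux_cos_sin w.re w.im hlocmax
    -- relate conj S * e^{iθ_i} to w
    have hz : (starRingEnd ℂ) S * Complex.exp ((θstar i : ℂ) * Complex.I)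
        = (a i : ℂ) + w / (a i : ℂ) := by
      rw [hSB, map_add, map_mul, add_mul]
      have hconj : (starRingEnd ℂ) ((a i : ℂ)) = (a i : ℂ) := Complex.conj_ofReal _
      have he : (starRingEnd ℂ) (Complex.exp ((θstar i : ℂ) * Complex.I))
          * Complex.exp ((θstar i : ℂ) * Complex.I) = 1 := by
        rw [Complex.conj_mul', Complex.norm_exp_ofReal_mul_I]
        norm_num
      have hai : (a i : ℂ) ≠ 0 := by
        exact_mod_cast ne_of_gt (ha i)
      rw [mul_assoc, he]
      field_simp [hw]
      rw [hconj, hw]; ring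
    constructor
    · rw [hz]
      simp [Complex.div_im, Complex.ofReal_im, him]
    · rw [hz]
      have hai : 0 < a i := ha i
      have : (w / (a i : ℂ)).re = w.re / a i := by
        simp [Complex.div_re, Complex.normSq_ofReal, Complex.ofReal_im]
        field_simp
      rw [Complex.add_re, Complex.ofReal_re, this]
      positivity
  -- conclude: each phasor is aligned with S
  have hz : ∀ i, (starRingEnd ℂ) S * Complex.exp ((θstar i : ℂ) * Complex.I)
      = (‖S‖ : ℂ) := by
    intro i
    obtain ⟨him, hre⟩ := key i
    set z : ℂ := (starRingEnd ℂ) S * Complex.exp ((θstar i : ℂ) * Complex.I) with hzdef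
    have hz' : z = (z.re : ℂ) := Complex.ext rfl (by simpa using him)
    have habs : ‖z‖ = ‖S‖ := by
      rw [hzdef, norm_mul, Complex.norm_conj, Complex.norm_exp_ofReal_mul_I, mul_one]
    have : z.re = ‖S‖ := by
      rw [← habs, hz', Complex.norm_real, Real.norm_eq_abs, abs_of_pos hre]
      simp
    rw [hz', this]
  -- S ≠ 0
  have hSne : ‖S‖ ≠ 0 := by
    intro h0
    obtain ⟨_, hre⟩ := key ⟨0, hN⟩
    have : S = 0 := by rwa [norm_eq_zero] at h0
    rw [this] at hre
    simp at hre
  -- final computation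
  have hfin : (starRingEnd ℂ) S * S = ((∑ i, a i : ℝ) : ℂ) * (‖S‖ : ℂ) := by
    calc (starRingEnd ℂ) S * S
        = ∑ i, (a i : ℂ) * ((starRingEnd ℂ) S * Complex.exp ((θstar i : ℂ) * Complex.I)) := by
          rw [hS]; rw [Finset.mul_sum]; exact Finset.sum_congr rfl fun i _ => by ring
      _ = ∑ i, (a i : ℂ) * (‖S‖ : ℂ) := by
          exact Finset.sum_congr rfl fun i _ => by rw [hz i]
      _ = ((∑ i, a i : ℝ) : ℂ) * (‖S‖ : ℂ) := by
          rw [← Finset.sum_mul]; push_cast; ring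
  have hns : (starRingEnd ℂ) S * S = ((‖S‖ ^ 2 : ℝ) : ℂ) := by
    rw [Complex.conj_mul']
    push_cast
    ring
  rw [hns] at hfin
  have hreal : ‖S‖ ^ 2 = (∑ i, a i) * ‖S‖ := by
    exact_mod_cast hfin
  have : Mag a θstar = ‖S‖ := rfl
  rw [this]
  have hpos : 0 < ‖S‖ := lt_of_le_of_ne (norm_nonneg S) (Ne.symm hSne)
  field_simp at hreal
  nlinarith
end

section
/- Suppose f : Θ → ℝ is bounded above by M, and a random process θ[n] satisfies (i) f(θ[n]) is nondecreasing, and (ii) there exist γ > 0, η ∈ (0,1] such that whenever f(θ[n]) ≤ M − ε, Pr[f(θ[n+1]) − f(θ[n]) ≥ γ | θ[n]] ≥ η. Then Pr[f(θ[n]) > M − ε] → 1 as n → ∞. -/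
open MeasureTheory Filter

lemma gains_le_aux (g : ℕ → ℝ) (γ : ℝ) (hmono : Monotone g) :
    ∀ s : Finset ℕ, (∀ m ∈ s, γ ≤ g (m + 1) - g m) → ∀ N, (∀ m ∈ s, m < N) →
      g 0 + s.card * γ ≤ g N := by
  intro s
  induction s using Finset.strongInduction with
  | _ s ih =>
    intro hgain N hN
    rcases s.eq_empty_or_nonempty with rfl | hne
    · simpa using hmono (Nat.zero_le N)
    · set m := s.max' hne with hm_def
      have hm : m ∈ s := s.max'_mem hne
      have hsub : s.erase m ⊂ s := Finset.erase_ssubset hm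
      have h1 : g 0 + (s.erase m).card * γ ≤ g m := by
        refine ih _ hsub (fun k hk => hgain k (Finset.mem_of_mem_erase hk)) m ?_
        intro k hk
        exact lt_of_le_of_ne (Finset.le_max' s k (Finset.mem_of_mem_erase hk))
          (Finset.ne_of_mem_erase hk)
      have h2 := hgain m hm
      have h3 : g (m + 1) ≤ g N := hmono (hN m hm)
      have hcard : (s.erase m).card + 1 = s.card := by
        rw [Finset.card_erase_of_mem hm]
        have := Finset.card_pos.mpr hne
        omega
      have hcard' : (s.card : ℝ) = (s.erase m).card + 1 := by
        rw [← hcard]; push_cast; ring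
      rw [hcard']
      linarith

theorem random_search_converges_in_probability
    {Ω : Type*} [MeasurableSpace Ω] (ℙ : Measure Ω) [IsProbabilityMeasure ℙ]
    {Θ : Type*} [MeasurableSpace Θ] (f : Θ → ℝ) (θ : ℕ → Ω → Θ)
    (M ε γ η : ℝ) (hε : 0 < ε) (hγ : 0 < γ) (hη : 0 < η) (hη1 : η ≤ 1)
    (hmeas : ∀ n, Measurable (fun ω => f (θ n ω)))
    (hbdd : ∀ n ω, f (θ n ω) ≤ M)
    (hmono : ∀ ω, Monotone (fun n => f (θ n ω)))
    (himp : ∀ n, ENNReal.ofReal η * ℙ {ω | f (θ n ω) ≤ M - ε} ≤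
      ℙ {ω | f (θ n ω) ≤ M - ε ∧ γ ≤ f (θ (n + 1) ω) - f (θ n ω)}) :
    Tendsto (fun n => ℙ {ω | M - ε < f (θ n ω)}) atTop (nhds 1) := by
  classical
  set A : ℕ → Set Ω := fun n => {ω | f (θ n ω) ≤ M - ε} with hA
  set B : ℕ → Set Ω := fun n =>
    {ω | f (θ n ω) ≤ M - ε ∧ γ ≤ f (θ (n + 1) ω) - f (θ n ω)} with hB
  set D : ℕ → Set Ω := fun K => {ω | M - K * γ ≤ f (θ 0 ω)} with hD
  set E : ℕ → Set Ω := fun K => {ω | f (θ 0 ω) < M - K * γ} with hE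
  have hAmeas : ∀ n, MeasurableSet (A n) := fun n =>
    measurableSet_le (hmeas n) measurable_const
  have hBmeas : ∀ n, MeasurableSet (B n) := by
    intro n
    have : B n = A n ∩ {ω | γ ≤ f (θ (n + 1) ω) - f (θ n ω)} := by
      ext ω; simp [hA, hB, Set.mem_setOf_eq]
    rw [this]
    exact (hAmeas n).inter
      (measurableSet_le measurable_const ((hmeas (n + 1)).sub (hmeas n)))
  have hDmeas : ∀ K, MeasurableSet (D K) := fun K =>
    measurableSet_le measurable_const (hmeas 0)
  have hEmeas : ∀ K, MeasurableSet (E K) := fun K =>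
    measurableSet_lt (hmeas 0) measurable_const
  have hne : ∀ s : Set Ω, ℙ s ≠ ⊤ := fun s => measure_ne_top ℙ s
  -- key counting bound
  have key : ∀ (K n : ℕ), ∑ m ∈ Finset.range n, ℙ (B m ∩ D K) ≤ K := by
    intro K n
    have hmeasBD : ∀ m, MeasurableSet (B m ∩ D K) := fun m => (hBmeas m).inter (hDmeas K)
    have hpt : ∀ ω : Ω,
        ∑ m ∈ Finset.range n, (B m ∩ D K).indicator (1 : Ω → ENNReal) ω ≤ K := by
      intro ω
      by_cases hωD : ω ∈ D K
      · have : ∑ m ∈ Finset.range n, (B m ∩ D K).indicator (1 : Ω → ENNReal) ω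
            = ((Finset.range n).filter (fun m => ω ∈ B m ∩ D K)).card := by
          rw [Finset.card_filter]
          push_cast
          refine Finset.sum_congr rfl fun m _ => ?_
          by_cases h : ω ∈ B m ∩ D K <;> simp [Set.indicator_apply, h]
        rw [this]
        have hcard : (((Finset.range n).filter (fun m => ω ∈ B m ∩ D K)).card : ℝ) ≤ K := by
          set s := (Finset.range n).filter (fun m => ω ∈ B m ∩ D K) with hs
          have hgain : ∀ m ∈ s, γ ≤ f (θ (m + 1) ω) - f (θ m ω) := by
            intro m hm
            have := (Finset.mem_filter.mp hm).2
            exact this.1.2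
          have hlt : ∀ m ∈ s, m < n := fun m hm =>
            Finset.mem_range.mp (Finset.mem_filter.mp hm).1
          have := gains_le_aux (fun k => f (θ k ω)) γ (hmono ω) s hgain n hlt
          have hbN := hbdd n ω
          have hD0 : M - K * γ ≤ f (θ 0 ω) := hωD
          have hKγ : (s.card : ℝ) * γ ≤ K * γ := by linarith
          exact le_of_mul_le_mul_right hKγ hγ
        exact_mod_cast hcard
      · have : ∀ m ∈ Finset.range n,
            (B m ∩ D K).indicator (1 : Ω → ENNReal) ω = 0 := by
          intro m _
          apply Set.indicator_of_notMem
          intro h; exact hωD h.2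
        rw [Finset.sum_congr rfl this]
        simp
    calc ∑ m ∈ Finset.range n, ℙ (B m ∩ D K)
        = ∑ m ∈ Finset.range n, ∫⁻ ω, (B m ∩ D K).indicator (1 : Ω → ENNReal) ω ∂ℙ := by
          refine Finset.sum_congr rfl fun m _ => ?_
          rw [lintegral_indicator_one (hmeasBD m)]
      _ = ∫⁻ ω, ∑ m ∈ Finset.range n, (B m ∩ D K).indicator (1 : Ω → ENNReal) ω ∂ℙ := by
          rw [lintegral_finset_sum]
          exact fun m _ => measurable_one.indicator (hmeasBD m)
      _ ≤ ∫⁻ _, (K : ENNReal) ∂ℙ := lintegral_mono hpt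
      _ = K := by simp
  -- real-valued quantities
  set a : ℕ → ℝ := fun n => (ℙ (A n)).toReal with ha
  set e : ℕ → ℝ := fun K => (ℙ (E K)).toReal with he
  have ha_nonneg : ∀ n, 0 ≤ a n := fun n => ENNReal.toReal_nonneg
  have hAsub : ∀ n, A (n + 1) ⊆ A n := by
    intro n ω hω
    have := hmono ω (Nat.le_succ n)
    exact le_trans this hω
  have ha_anti : Antitone a := by
    apply antitone_nat_of_succ_le
    intro n
    exact ENNReal.toReal_mono (hne _) (measure_mono (hAsub n))
  have h1 : ∀ m, η * a m ≤ (ℙ (B m)).toReal := by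
    intro m
    have h := himp m
    have : ((ENNReal.ofReal η) * ℙ (A m)).toReal = η * a m := by
      rw [ENNReal.toReal_mul, ENNReal.toReal_ofReal hη.le]
    rw [← this]
    exact ENNReal.toReal_mono (hne _) h
  have h2 : ∀ m K, (ℙ (B m)).toReal ≤ (ℙ (B m ∩ D K)).toReal + e K := by
    intro m K
    have hsub : B m ⊆ (B m ∩ D K) ∪ E K := by
      intro ω hω
      by_cases h : ω ∈ D K
      · exact Or.inl ⟨hω, h⟩
      · exact Or.inr (show f (θ 0 ω) < M - K * γ from lt_of_not_ge h)
    have := le_trans (measure_mono hsub) (measure_union_le (μ := ℙ) _ _)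
    calc (ℙ (B m)).toReal ≤ (ℙ (B m ∩ D K) + ℙ (E K)).toReal :=
          ENNReal.toReal_mono (by finiteness) this
      _ = (ℙ (B m ∩ D K)).toReal + e K := ENNReal.toReal_add (hne _) (hne _)
  have h3 : ∀ K n, ∑ m ∈ Finset.range n, (ℙ (B m ∩ D K)).toReal ≤ K := by
    intro K n
    have := key K n
    calc ∑ m ∈ Finset.range n, (ℙ (B m ∩ D K)).toReal
        = (∑ m ∈ Finset.range n, ℙ (B m ∩ D K)).toReal :=
          (ENNReal.toReal_sum fun m _ => hne _).symm
      _ ≤ ((K : ENNReal)).toReal := ENNReal.toReal_mono (ENNReal.natCast_ne_top K) this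
      _ = K := by simp
  have h5 : ∀ (K n : ℕ), (n : ℝ) * (η * a n) ≤ K + n * e K := by
    intro K n
    calc (n : ℝ) * (η * a n) = ∑ _m ∈ Finset.range n, η * a n := by
          rw [Finset.sum_const, Finset.card_range, nsmul_eq_mul]
      _ ≤ ∑ m ∈ Finset.range n, η * a m := by
          refine Finset.sum_le_sum fun m hm => ?_
          exact mul_le_mul_of_nonneg_left (ha_anti (le_of_lt (Finset.mem_range.mp hm))) hη.le
      _ ≤ ∑ m ∈ Finset.range n, (ℙ (B m)).toReal := Finset.sum_le_sum fun m _ => h1 m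
      _ ≤ ∑ m ∈ Finset.range n, ((ℙ (B m ∩ D K)).toReal + e K) :=
          Finset.sum_le_sum fun m _ => h2 m K
      _ = (∑ m ∈ Finset.range n, (ℙ (B m ∩ D K)).toReal) + n * e K := by
          rw [Finset.sum_add_distrib, Finset.sum_const, Finset.card_range, nsmul_eq_mul]
      _ ≤ K + n * e K := by
          have := h3 K n; linarith
  -- e K → 0
  have hEanti : Antitone E := by
    intro K K' hKK' ω hω
    have : (K : ℝ) * γ ≤ K' * γ := by
      apply mul_le_mul_of_nonneg_right _ hγ.le
      exact_mod_cast hKK'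
    simp only [hE, Set.mem_setOf_eq] at hω ⊢
    linarith
  have hEempty : ⋂ K, E K = ∅ := by
    ext ω
    simp only [Set.mem_iInter, Set.mem_empty_iff_false, iff_false, not_forall]
    obtain ⟨K, hK⟩ := exists_nat_gt ((M - f (θ 0 ω)) / γ)
    refine ⟨K, ?_⟩
    simp only [hE, Set.mem_setOf_eq, not_lt]
    have : M - f (θ 0 ω) < K * γ := by
      rw [div_lt_iff₀ hγ] at hK; linarith
    linarith
  have hEtendsto : Tendsto (fun K => ℙ (E K)) atTop (nhds 0) := by
    have := tendsto_measure_iInter_atTop (μ := ℙ) (fun K => (hEmeas K).nullMeasurableSet)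
      hEanti ⟨0, hne _⟩
    rwa [hEempty, measure_empty] at this
  have he_tendsto : Tendsto e atTop (nhds 0) := by
    have := (ENNReal.tendsto_toReal (by simp : (0 : ENNReal) ≠ ⊤)).comp hEtendsto
    simpa [he, Function.comp_def] using this
  -- a → 0
  have ha0 : Tendsto a atTop (nhds 0) := by
    rw [Metric.tendsto_atTop]
    intro δ hδ
    have hηδ : 0 < η * δ / 2 := by positivity
    obtain ⟨K, hK⟩ : ∃ K, e K < η * δ / 2 := by
      have := (Metric.tendsto_atTop.mp he_tendsto) (η * δ / 2) hηδ
      obtain ⟨K, hK⟩ := this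
      refine ⟨K, ?_⟩
      have := hK K le_rfl
      rw [Real.dist_eq, sub_zero] at this
      calc e K ≤ |e K| := le_abs_self _
        _ < η * δ / 2 := this
    have hex : ∃ N, a N < δ := by
      by_contra hcon
      push_neg at hcon
      obtain ⟨n, hn⟩ := exists_nat_gt ((K : ℝ) / (η * δ / 2))
      have hb := h5 K n
      have h6 : (n : ℝ) * (η * δ) ≤ n * (η * a n) := by
        apply mul_le_mul_of_nonneg_left _ (Nat.cast_nonneg n)
        exact mul_le_mul_of_nonneg_left (hcon n) hη.le
      have h7 : (n : ℝ) * e K ≤ n * (η * δ / 2) := by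
        apply mul_le_mul_of_nonneg_left hK.le (Nat.cast_nonneg n)
      have h8 : (n : ℝ) * (η * δ / 2) ≤ K := by nlinarith
      rw [div_lt_iff₀ hηδ] at hn
      linarith
    obtain ⟨N, hN⟩ := hex
    refine ⟨N, fun n hn => ?_⟩
    rw [Real.dist_eq, sub_zero, abs_of_nonneg (ha_nonneg n)]
    exact lt_of_le_of_lt (ha_anti hn) hN
  -- conclude
  have hAtendsto : Tendsto (fun n => ℙ (A n)) atTop (nhds 0) := by
    have h := (ENNReal.continuous_ofReal.tendsto 0).comp ha0
    rw [ENNReal.ofReal_zero] at h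
    exact h.congr fun n => ENNReal.ofReal_toReal (hne _)
  have hcompl : ∀ n, {ω | M - ε < f (θ n ω)} = (A n)ᶜ := by
    intro n; ext ω; simp [hA, Set.mem_setOf_eq, not_le]
  have : Tendsto (fun n => 1 - ℙ (A n)) atTop (nhds 1) := by
    have := ENNReal.Tendsto.sub (tendsto_const_nhds (x := (1 : ENNReal))) hAtendsto
      (Or.inl ENNReal.one_ne_top)
    simpa using this
  refine this.congr fun n => ?_
  rw [hcompl n, prob_compl_eq_one_sub (hAmeas n)]
end

section
/- If the origin is an interior point of the support of the perturbation measure μ and θ is any point with Mag(θ) < max Mag − ε, then there exist γ > 0 and η > 0 such that Pr[Mag(θ + δ) − Mag(θ) ≥ γ] ≥ η, where δ ∼ μ. -/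
open MeasureTheory
open scoped ENNReal

open Complex in
lemma exists_improve {N : ℕ} (hN : 1 ≤ N) (a : Fin N → ℝ) (ha : ∀ i, 0 < a i)
    (Δ : ℝ) (hΔ : 0 < Δ) (θ : Fin N → ℝ) (hθ : Mag a θ < ∑ i, a i) :
    ∃ u : Fin N → ℝ, (∀ j, |u j| < Δ) ∧ Mag a θ < Mag a (θ + u) := by
  classical
  set S : ℂ := ∑ i, (a i : ℂ) * Complex.exp ((θ i : ℂ) * Complex.I) with hS
  have hMag : Mag a θ = ‖S‖ := rfl
  set c : Fin N → ℝ := fun i => ((starRingEnd ℂ) S * Complex.exp ((θ i : ℂ) * I)).re with hc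
  set s : Fin N → ℝ := fun i => ((starRingEnd ℂ) S * Complex.exp ((θ i : ℂ) * I)).im with hs
  -- basic facts
  have hnormz : ∀ i, (c i) ^ 2 + (s i) ^ 2 = Complex.normSq S := by
    intro i
    have h1 : Complex.normSq ((starRingEnd ℂ) S * Complex.exp ((θ i : ℂ) * I)) =
        Complex.normSq S := by
      rw [Complex.normSq_mul, Complex.normSq_conj]
      have : ‖Complex.exp ((θ i : ℂ) * I)‖ = 1 :=
        Complex.norm_exp_ofReal_mul_I (θ i)
      have h2 : Complex.normSq (Complex.exp ((θ i : ℂ) * I)) = 1 := by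
        rw [← Complex.sq_norm, this]; norm_num
      rw [h2, mul_one]
    rw [← h1, Complex.normSq_apply, hc, hs]; ring
  have hsumc : ∑ i, a i * c i = Complex.normSq S := by
    have h1 : ∑ i, a i * c i =
        ((starRingEnd ℂ) S * ∑ i, (a i : ℂ) * Complex.exp ((θ i : ℂ) * I)).re := by
      rw [Finset.mul_sum, Complex.re_sum]
      apply Finset.sum_congr rfl
      intro i _
      have : (starRingEnd ℂ) S * ((a i : ℂ) * Complex.exp ((θ i : ℂ) * I)) =
          (a i : ℂ) * ((starRingEnd ℂ) S * Complex.exp ((θ i : ℂ) * I)) := by ring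
      rw [this, Complex.re_ofReal_mul, hc]
    rw [h1, ← hS]
    have h2 : (starRingEnd ℂ) S * S = (Complex.normSq S : ℂ) := by
      rw [mul_comm, Complex.mul_conj]
    rw [h2, Complex.ofReal_re]
  -- find a good index
  have hexists : ∃ i, s i ≠ 0 ∨ c i < a i := by
    by_contra hcon
    push_neg at hcon
    have hceq : ∀ i, c i = ‖S‖ := by
      intro i
      obtain ⟨hsi, hci⟩ := hcon i
      have h1 : (c i) ^ 2 = Complex.normSq S := by
        have := hnormz i; rw [hsi] at this; simpa using this
      have h2 : (c i) ^ 2 = (‖S‖) ^ 2 := by rw [h1, Complex.sq_norm]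
      have hcpos : 0 < c i := lt_of_lt_of_le (ha i) hci
      nlinarith [norm_nonneg S]
    obtain ⟨i₀⟩ : Nonempty (Fin N) := ⟨⟨0, hN⟩⟩
    have habs : 0 < ‖S‖ := by
      rw [← hceq i₀]; exact lt_of_lt_of_le (ha i₀) (hcon i₀).2
    have : Complex.normSq S = (∑ i, a i) * ‖S‖ := by
      rw [← hsumc, Finset.sum_mul]
      exact Finset.sum_congr rfl fun i _ => by rw [hceq i]
    have h3 : (‖S‖) ^ 2 = (∑ i, a i) * ‖S‖ := by
      rw [Complex.sq_norm, this]
    have h4 : ‖S‖ = ∑ i, a i := by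
      rw [pow_two] at h3
      exact mul_left_cancel₀ (ne_of_gt habs) (by rw [mul_comm (∑ i, a i)] at h3; exact h3)
    rw [hMag, h4] at hθ
    exact lt_irrefl _ hθ
  obtain ⟨i, hi⟩ := hexists
  -- find a good step t
  have hstep : ∃ t : ℝ, |t| < Δ ∧
      0 < (a i - c i) * (1 - Real.cos t) - s i * Real.sin t := by
    by_cases hsi : s i = 0
    · have hci : c i < a i := by
        rcases hi with h | h
        · exact absurd hsi h
        · exact h
      refine ⟨min (Δ / 2) 1, ?_, ?_⟩
      · rw [abs_of_pos (by positivity)]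
        calc min (Δ / 2) 1 ≤ Δ / 2 := min_le_left _ _
          _ < Δ := by linarith
      · have ht0 : (0:ℝ) < min (Δ / 2) 1 := by positivity
        have htπ : min (Δ / 2) 1 ≤ Real.pi := by
          have := Real.pi_gt_three
          calc min (Δ / 2) 1 ≤ 1 := min_le_right _ _
            _ ≤ Real.pi := by linarith
        have hcos : Real.cos (min (Δ / 2) 1) < 1 := by
          have := Real.cos_lt_cos_of_nonneg_of_le_pi le_rfl htπ ht0
          simpa using this
        rw [hsi]
        have : 0 < (a i - c i) * (1 - Real.cos (min (Δ / 2) 1)) := by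
          apply mul_pos <;> linarith
        linarith
    · -- s i ≠ 0 : take a tiny step in the right direction
      set b : ℝ := |a i - c i| with hb
      set τ : ℝ := min (Δ / 2) (min 1 (|s i| / (b + 1))) with hτdef
      have hb0 : 0 ≤ b := abs_nonneg _
      have hsabs : 0 < |s i| := abs_pos.mpr hsi
      have hτ0 : 0 < τ := by
        apply lt_min (by linarith)
        apply lt_min one_pos
        positivity
      have hτ1 : τ ≤ 1 := le_trans (min_le_right _ _) (min_le_left _ _)
      have hτΔ : τ < Δ := lt_of_le_of_lt (min_le_left _ _) (by linarith)
      have hτb : τ * (b + 1) ≤ |s i| := by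
        have h1 : τ ≤ |s i| / (b + 1) :=
          le_trans (min_le_right _ _) (min_le_right _ _)
        rw [div_eq_mul_inv] at h1
        calc τ * (b + 1) ≤ |s i| * (b + 1)⁻¹ * (b + 1) := by
              apply mul_le_mul_of_nonneg_right h1; linarith
          _ = |s i| := by field_simp
      have hcosτ : 1 - τ ^ 2 / 2 < Real.cos τ :=
        Real.one_sub_sq_div_two_lt_cos (ne_of_gt hτ0)
      have hcosle : Real.cos τ ≤ 1 := Real.cos_le_one τ
      have hsinτ : τ - τ ^ 3 / 4 < Real.sin τ := by
        have := Real.sin_gt_sub_cube hτ0; linarith [pow_pos hτ0 3]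
      refine ⟨if 0 < s i then -τ else τ, ?_, ?_⟩
      · rcases lt_or_ge 0 (s i) with h | h
        · rw [if_pos h, abs_neg, abs_of_pos hτ0]; exact hτΔ
        · rw [if_neg (not_lt.mpr h), abs_of_pos hτ0]; exact hτΔ
      · have hkey : s i * Real.sin (if 0 < s i then -τ else τ) = -(|s i| * Real.sin τ) := by
          rcases lt_or_ge 0 (s i) with h | h
          · rw [if_pos h, Real.sin_neg, abs_of_pos h]; ring
          · rw [if_neg (not_lt.mpr h), abs_of_nonpos (by linarith [lt_of_le_of_ne h hsi])]
            ring
        have hcoseq : Real.cos (if 0 < s i then -τ else τ) = Real.cos τ := by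
          split <;> simp [Real.cos_neg]
        rw [hkey, hcoseq]
        have hac1 : -b ≤ a i - c i := neg_abs_le _
        have hτ3 : τ ^ 3 ≤ τ := by nlinarith
        nlinarith [mul_le_mul_of_nonneg_left hτb (le_of_lt hτ0),
          mul_lt_mul_of_pos_left hsinτ hsabs,
          mul_le_mul_of_nonneg_right hac1 (by linarith : (0:ℝ) ≤ 1 - Real.cos τ),
          mul_lt_mul_of_pos_left hcosτ (by positivity : (0:ℝ) < b + 1)]
  obtain ⟨t, htΔ, hkey⟩ := hstep
  -- the perturbation
  set u : Fin N → ℝ := fun j => if j = i then t else 0 with hu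
  have huΔ : ∀ j, |u j| < Δ := by
    intro j
    by_cases h : j = i
    · simp [hu, h, htΔ]
    · simp [hu, h, hΔ]
  set E : ℂ := (a i : ℂ) * Complex.exp ((θ i : ℂ) * I) * (Complex.exp ((t : ℂ) * I) - 1)
    with hE
  have hsum : ∑ j, (a j : ℂ) * Complex.exp (((θ + u) j : ℂ) * I) = S + E := by
    have h1 : ∀ j, (a j : ℂ) * Complex.exp (((θ + u) j : ℂ) * I) =
        (a j : ℂ) * Complex.exp ((θ j : ℂ) * I) + (if j = i then E else 0) := by
      intro j
      by_cases h : j = i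
      · subst h
        have h2 : ((θ + u) j : ℂ) = (θ j : ℂ) + (t : ℂ) := by
          simp [hu, Pi.add_apply]
        rw [if_pos rfl, h2, hE, add_mul, Complex.exp_add]
        ring
      · have h2 : ((θ + u) j : ℂ) = (θ j : ℂ) := by simp [hu, Pi.add_apply, h]
        rw [if_neg h, h2, add_zero]
    calc ∑ j, (a j : ℂ) * Complex.exp (((θ + u) j : ℂ) * I)
        = ∑ j, ((a j : ℂ) * Complex.exp ((θ j : ℂ) * I) + (if j = i then E else 0)) :=
          Finset.sum_congr rfl fun j _ => h1 j
      _ = S + E := by rw [Finset.sum_add_distrib, ← hS, Finset.sum_ite_eq' Finset.univ i]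
                      simp
  -- compare squared magnitudes
  have hre : (Complex.exp ((t : ℂ) * I)).re = Real.cos t := by
    simp [Complex.exp_mul_I, Complex.add_re, Complex.mul_re, Complex.I_re, Complex.I_im,
      Complex.cos_ofReal_re, Complex.sin_ofReal_im]
  have him : (Complex.exp ((t : ℂ) * I)).im = Real.sin t := by
    simp [Complex.exp_mul_I, Complex.add_im, Complex.mul_im, Complex.I_re, Complex.I_im,
      Complex.cos_ofReal_im, Complex.sin_ofReal_re]
  have hcross : (S * (starRingEnd ℂ) E).re =
      a i * (c i * (Real.cos t - 1) - s i * Real.sin t) := by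
    have h1 : (S * (starRingEnd ℂ) E).re = ((starRingEnd ℂ) (S * (starRingEnd ℂ) E)).re := by
      rw [Complex.conj_re]
    rw [h1, map_mul, Complex.conj_conj]
    have h2 : (starRingEnd ℂ) S * E =
        (a i : ℂ) * (((starRingEnd ℂ) S * Complex.exp ((θ i : ℂ) * I)) *
          (Complex.exp ((t : ℂ) * I) - 1)) := by
      rw [hE]; ring
    rw [h2, Complex.re_ofReal_mul, Complex.mul_re]
    simp only [Complex.sub_re, Complex.sub_im, Complex.one_re, Complex.one_im, hre, him]
    simp only [hc, hs]
    ring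
  have hnormE : Complex.normSq E = (a i) ^ 2 * (2 - 2 * Real.cos t) := by
    rw [hE, Complex.normSq_mul, Complex.normSq_mul]
    have h1 : Complex.normSq ((a i : ℂ)) = (a i) ^ 2 := by
      rw [Complex.normSq_ofReal]; ring
    have h2 : Complex.normSq (Complex.exp ((θ i : ℂ) * I)) = 1 := by
      rw [← Complex.sq_norm, Complex.norm_exp_ofReal_mul_I]; norm_num
    have h3 : Complex.normSq (Complex.exp ((t : ℂ) * I) - 1) = 2 - 2 * Real.cos t := by
      rw [Complex.normSq_apply]
      simp only [Complex.sub_re, Complex.sub_im, Complex.one_re, Complex.one_im, hre, him]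
      have := Real.sin_sq_add_cos_sq t
      ring_nf
      nlinarith [Real.sin_sq_add_cos_sq t]
    rw [h1, h2, h3]; ring
  have hlt : Complex.normSq S < Complex.normSq (S + E) := by
    rw [Complex.normSq_add, hcross, hnormE]
    have hai := ha i
    nlinarith
  have habs : ‖S‖ < ‖S + E‖ := by
    have h1 : (‖S‖) ^ 2 < (‖S + E‖) ^ 2 := by
      rw [Complex.sq_norm, Complex.sq_norm]; exact hlt
    exact lt_of_pow_lt_pow_left₀ 2 (norm_nonneg _) h1
  refine ⟨u, huΔ, ?_⟩
  rw [hMag]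
  have : Mag a (θ + u) = ‖S + E‖ := by
    rw [Mag, hsum]
  rw [this]
  exact habs

/-- Proposition 1: positive improvement probability. The probability (under the
uniform distribution on the hypercube `[-Δ, Δ]^N`) of improving `Mag` by at least
`γ` is at least `η`, stated via Lebesgue measure: the measure of improving
perturbations is at least `η` times the measure of the hypercube. -/
theorem positive_improvement_probability {N : ℕ} (hN : 1 ≤ N)
    (a : Fin N → ℝ) (ha : ∀ i, 0 < a i) (Δ ε : ℝ) (hΔ : 0 < Δ) (hε : 0 < ε)
    (θ : Fin N → ℝ) (hθ : Mag a θ < (∑ i, a i) - ε) :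
    ∃ γ > 0, ∃ η > 0,
      ENNReal.ofReal η *
          volume (Set.pi Set.univ fun _ : Fin N => Set.Icc (-Δ) Δ) ≤
        volume {u : Fin N → ℝ |
          u ∈ Set.pi Set.univ (fun _ : Fin N => Set.Icc (-Δ) Δ) ∧
            γ ≤ Mag a (θ + u) - Mag a θ} := by
  classical
  have hθ' : Mag a θ < ∑ i, a i := by linarith
  obtain ⟨u₀, hu₀Δ, hu₀⟩ := exists_improve hN a ha Δ hΔ θ hθ'
  set γ : ℝ := (Mag a (θ + u₀) - Mag a θ) / 2 with hγdef
  have hγ : 0 < γ := by simp only [hγdef]; linarith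
  -- continuity
  have hcont : Continuous fun u : Fin N → ℝ => Mag a (θ + u) := by
    unfold Mag
    apply continuous_norm.comp
    apply continuous_finset_sum
    intro i _
    apply continuous_const.mul
    apply Complex.continuous_exp.comp
    apply Continuous.mul _ continuous_const
    exact Complex.continuous_ofReal.comp (continuous_const.add (continuous_apply i))
  set W : Set (Fin N → ℝ) := {u | Mag a θ + γ < Mag a (θ + u)} with hW
  have hWopen : IsOpen W := isOpen_lt continuous_const hcont
  have hu₀W : u₀ ∈ W := by
    simp only [hW, Set.mem_setOf_eq, hγdef]; linarith
  set O : Set (Fin N → ℝ) := Set.pi Set.univ fun _ : Fin N => Set.Ioo (-Δ) Δ with hO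
  have hOopen : IsOpen O := isOpen_set_pi Set.finite_univ fun i _ => isOpen_Ioo
  have hu₀O : u₀ ∈ O := by
    intro j _
    exact abs_lt.mp (hu₀Δ j)
  set T : Set (Fin N → ℝ) := {u : Fin N → ℝ |
      u ∈ Set.pi Set.univ (fun _ : Fin N => Set.Icc (-Δ) Δ) ∧
        γ ≤ Mag a (θ + u) - Mag a θ} with hT
  have hsub : W ∩ O ⊆ T := by
    rintro u ⟨huW, huO⟩
    constructor
    · intro j hj
      exact Set.Ioo_subset_Icc_self (huO j hj)
    · have : Mag a θ + γ < Mag a (θ + u) := huW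
      linarith
  have hvpos : 0 < volume T := by
    apply lt_of_lt_of_le _ (measure_mono hsub)
    exact (hWopen.inter hOopen).measure_pos volume ⟨u₀, hu₀W, hu₀O⟩
  set C : ℝ≥0∞ := volume (Set.pi Set.univ fun _ : Fin N => Set.Icc (-Δ) Δ) with hCdef
  have hCeq : C = (ENNReal.ofReal (2 * Δ)) ^ N := by
    rw [hCdef, volume_pi_pi]
    simp [Real.volume_Icc, Finset.prod_const]
    ring_nf
    rw [ENNReal.ofReal_mul hΔ.le, mul_pow, ENNReal.ofReal_ofNat]
  have hC0 : C ≠ 0 := by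
    rw [hCeq]
    apply pow_ne_zero
    simp [ENNReal.ofReal_eq_zero]
    linarith
  have hCtop : C ≠ ⊤ := by
    rw [hCeq]
    exact ENNReal.pow_ne_top ENNReal.ofReal_ne_top
  have hTC : volume T ≤ C := by
    apply measure_mono
    intro u hu
    exact hu.1
  have hTtop : volume T ≠ ⊤ := (lt_of_le_of_lt hTC (lt_top_iff_ne_top.mpr hCtop)).ne
  have hdivtop : volume T / C ≠ ⊤ := (ENNReal.div_lt_top hTtop hC0).ne
  refine ⟨γ, hγ, (volume T / C).toReal, ?_, ?_⟩
  · exact ENNReal.toReal_pos (ENNReal.div_pos hvpos.ne' hCtop).ne' hdivtop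
  · rw [ENNReal.ofReal_toReal hdivtop, ENNReal.div_mul_cancel hC0 hCtop]
end

section
/- Let δ be uniform on [−Δ,Δ]^N and θ ∈ ℝ^N with Mag(θ) < ∑ a_i. Since Mag is continuous and every local maximum is global, there exists an open set U ⊆ [−Δ,Δ]^N of positive Lebesgue measure such that Mag(θ + u) > Mag(θ) for all u ∈ U. -/
open MeasureTheory
open scoped ENNReal

theorem improving_open_set_in_cube {N : ℕ} (hN : 1 ≤ N)
    (a : Fin N → ℝ) (ha : ∀ i, 0 < a i) (Δ : ℝ) (hΔ : 0 < Δ)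
    (θ : Fin N → ℝ) (hθ : Mag a θ < ∑ i, a i) :
    ∃ U : Set (Fin N → ℝ), IsOpen U ∧
      U ⊆ Set.pi Set.univ (fun _ : Fin N => Set.Icc (-Δ) Δ) ∧
      0 < volume U ∧
      ∀ u ∈ U, Mag a θ < Mag a (θ + u) := by
  classical
  set S : ℂ := ∑ i, (a i : ℂ) * Complex.exp ((θ i : ℂ) * Complex.I) with hS
  have hMagθ : Mag a θ = ‖S‖ := rfl
  set w : Fin N → ℂ := fun i => (starRingEnd ℂ) S * Complex.exp ((θ i : ℂ) * Complex.I)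
    with hw
  have habsw : ∀ i, ‖w i‖ = ‖S‖ := by
    intro i
    simp [hw, map_mul, Complex.norm_exp_ofReal_mul_I, Complex.norm_conj]
  -- Step 1: find an improving coordinate
  have key : ∃ i : Fin N, (w i).im ≠ 0 ∨ (w i).re < a i := by
    by_contra h
    push_neg at h
    have hre : ∀ i, (w i).re = ‖S‖ := by
      intro i
      have h1 := (h i).1
      have h2 := (h i).2
      have hpos : 0 < (w i).re := lt_of_lt_of_le (ha i) h2
      have habs : ‖w i‖ = |(w i).re| := by
        rw [Complex.norm_def, Complex.normSq_apply, h1]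
        rw [mul_zero, add_zero, ← sq, Real.sqrt_sq_eq_abs]
      rw [← habsw i, habs, abs_of_pos hpos]
    have hSpos : 0 < ‖S‖ := by
      obtain ⟨i⟩ : Nonempty (Fin N) := Fin.pos_iff_nonempty.mp hN
      calc (0:ℝ) < a i := ha i
        _ ≤ (w i).re := (h i).2
        _ = ‖S‖ := hre i
    have hsq : (‖S‖) ^ 2 = (∑ i, a i) * ‖S‖ := by
      have h1 : ((starRingEnd ℂ) S * S).re = (‖S‖) ^ 2 := by
        rw [Complex.sq_norm]
        simp [Complex.normSq_apply, Complex.mul_re, mul_comm]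
      have h2 : (starRingEnd ℂ) S * S = ∑ i, (a i : ℂ) * w i := by
        rw [hS, Finset.mul_sum]
        refine Finset.sum_congr rfl fun i _ => ?_
        rw [hw]; ring
      rw [h2, Complex.re_sum] at h1
      rw [← h1, Finset.sum_mul]
      refine Finset.sum_congr rfl fun i _ => ?_
      rw [← hre i]
      simp [Complex.mul_re]
    have heq : ‖S‖ = ∑ i, a i := by
      nlinarith [hSpos]
    rw [hMagθ, heq] at hθ
    exact lt_irrefl _ hθ
  obtain ⟨i, hi⟩ := key
  set E : ℂ := Complex.exp ((θ i : ℂ) * Complex.I) with hE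
  have hEnorm : E.re ^ 2 + E.im ^ 2 = 1 := by
    have h1 : Complex.normSq E = 1 := by
      have h2 := Complex.norm_exp_ofReal_mul_I (θ i)
      rw [← hE] at h2
      rw [← Complex.sq_norm, h2]; norm_num
    simpa [Complex.normSq_apply, sq] using h1
  -- value of Mag after perturbing coordinate i by x
  have hMagx : ∀ x : ℝ, Mag a (θ + Pi.single i x)
      = ‖S + (a i : ℂ) * E * (Complex.exp ((x : ℂ) * Complex.I) - 1)‖ := by
    intro x
    unfold Mag
    congr 1
    have hterm : ∀ j : Fin N,
        (a j : ℂ) * Complex.exp ((((θ + Pi.single i x : Fin N → ℝ) j : ℝ) : ℂ) * Complex.I)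
        = (a j : ℂ) * Complex.exp ((θ j : ℂ) * Complex.I)
          + (if j = i then (a i : ℂ) * E * (Complex.exp ((x : ℂ) * Complex.I) - 1) else 0) := by
      intro j
      by_cases hj : j = i
      · subst hj
        simp only [Pi.add_apply, Pi.single_eq_same, if_pos rfl, hE]
        push_cast
        rw [add_mul, Complex.exp_add]
        ring
      · rw [if_neg hj]
        simp [Pi.add_apply, Pi.single_eq_of_ne hj]
    rw [Finset.sum_congr rfl fun j _ => hterm j, Finset.sum_add_distrib,
      Finset.sum_ite_eq' Finset.univ i]
    simp [hS]
  -- normSq identity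
  have hD : ∀ x : ℝ,
      Complex.normSq (S + (a i : ℂ) * E * (Complex.exp ((x : ℂ) * Complex.I) - 1))
        = Complex.normSq S
          + 2 * (a i) * ((1 - Real.cos x) * (a i - (w i).re) - Real.sin x * (w i).im) := by
    intro x
    rw [Complex.exp_mul_I]
    have hwre : (w i).re = S.re * E.re + S.im * E.im := by
      simp [hw, hE, Complex.mul_re]
    have hwim : (w i).im = S.re * E.im - S.im * E.re := by
      simp [hw, hE, Complex.mul_im]; ring
    rw [hwre, hwim]
    simp only [Complex.normSq_apply, Complex.add_re, Complex.add_im, Complex.mul_re,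
      Complex.mul_im, Complex.sub_re, Complex.sub_im, Complex.ofReal_re, Complex.ofReal_im,
      Complex.cos_ofReal_re, Complex.cos_ofReal_im, Complex.sin_ofReal_re, Complex.sin_ofReal_im,
      Complex.I_re, Complex.I_im, Complex.one_re, Complex.one_im]
    linear_combination (a i ^ 2 * (2 - 2 * Real.cos x)) * hEnorm
      + (a i ^ 2 * (E.re ^ 2 + E.im ^ 2)) * Real.sin_sq_add_cos_sq x
  -- find an improving perturbation size x0
  have himp : ∃ x0 : ℝ, |x0| < Δ ∧ Complex.normSq S
      < Complex.normSq (S + (a i : ℂ) * E * (Complex.exp ((x0 : ℂ) * Complex.I) - 1)) := by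
    by_cases him : (w i).im = 0
    · -- flipped / deficient coordinate: any small perturbation helps
      have hreB : (w i).re < a i := hi.resolve_left (by simp [him])
      refine ⟨min Δ 1 / 2, ?_, ?_⟩
      · rw [abs_of_pos (by positivity)]
        calc min Δ 1 / 2 ≤ Δ / 2 := by gcongr; exact min_le_left _ _
          _ < Δ := by linarith
      · rw [hD]
        have hx0pos : 0 < min Δ 1 / 2 := by positivity
        have hx1 : min Δ 1 / 2 ≤ 1 / 2 := by
          have := min_le_right Δ 1; linarith
        have hcos : Real.cos (min Δ 1 / 2) < 1 := by
          refine lt_of_le_of_ne (Real.cos_le_one _) fun hcos1 => ?_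
          have hpi := Real.pi_gt_three
          have := (Real.cos_eq_one_iff_of_lt_of_lt (by linarith) (by linarith)).mp hcos1
          exact hx0pos.ne' this
        have hprod : 0 < 2 * a i * ((1 - Real.cos (min Δ 1 / 2)) * (a i - (w i).re)) := by
          apply mul_pos (by linarith [ha i])
          apply mul_pos (by linarith) (by linarith)
        rw [him]
        nlinarith [hprod]
    · -- gradient coordinate: perturb against the imaginary part
      set c : ℝ := |a i - (w i).re| with hc
      set m : ℝ := |(w i).im| with hm
      have hmpos : 0 < m := abs_pos.mpr him
      set ε : ℝ := min (min (Δ / 2) 1) (m / (1 + c)) with hε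
      have hcnn : (0:ℝ) ≤ c := abs_nonneg _
      have hεpos : 0 < ε := by
        apply lt_min (lt_min (by linarith) one_pos)
        positivity
      have hε1 : ε ≤ 1 := le_trans (min_le_left _ _) (min_le_right _ _)
      have hεΔ : ε < Δ := by
        have : ε ≤ Δ / 2 := le_trans (min_le_left _ _) (min_le_left _ _)
        linarith
      have hεm : ε * c < m := by
        have h1 : ε ≤ m / (1 + c) := min_le_right _ _
        have h2 : ε * c ≤ m / (1 + c) * c := mul_le_mul_of_nonneg_right h1 hcnn
        have h3 : m / (1 + c) * c < m := by
          rw [div_mul_eq_mul_div, div_lt_iff₀ (by linarith)]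
          nlinarith
        linarith
      set x0 : ℝ := if 0 < (w i).im then -ε else ε with hx0
      have habs : |x0| = ε := by
        rw [hx0]; split
        · rw [abs_neg, abs_of_pos hεpos]
        · rw [abs_of_pos hεpos]
      refine ⟨x0, by rw [habs]; exact hεΔ, ?_⟩
      rw [hD]
      have hcosx : Real.cos x0 = Real.cos ε := by
        rw [hx0]; split
        · rw [Real.cos_neg]
        · rfl
      have hsinx : Real.sin x0 * (w i).im = -(Real.sin ε * m) := by
        rw [hx0, hm]; split
        · rename_i hpos
          rw [Real.sin_neg, abs_of_pos hpos]; ring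
        · rename_i hneg
          push_neg at hneg
          rw [abs_of_nonpos hneg]; ring
      rw [hcosx, hsinx]
      have hcube : ε ^ 3 ≤ ε := by
        nlinarith [mul_nonneg (mul_nonneg hεpos.le (sub_nonneg.2 hε1)) (by linarith : (0:ℝ) ≤ 1 + ε)]
      have hsin : ε / 2 < Real.sin ε := by
        have := Real.sin_gt_sub_cube hεpos
        linarith
      have hcosb : 1 - Real.cos ε ≤ ε ^ 2 / 2 := by
        linarith [Real.one_sub_sq_div_two_le_cos (x := ε)]
      have hcosnn : 0 ≤ 1 - Real.cos ε := by linarith [Real.cos_le_one ε]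
      have hkey : 0 < (1 - Real.cos ε) * (a i - (w i).re) - -(Real.sin ε * m) := by
        have h1 : -((1 - Real.cos ε) * c) ≤ (1 - Real.cos ε) * (a i - (w i).re) := by
          have hna : -c ≤ a i - (w i).re := neg_abs_le _
          have := mul_le_mul_of_nonneg_left hna hcosnn
          linarith
        have h2 : ε / 2 * m < Real.sin ε * m := mul_lt_mul_of_pos_right hsin hmpos
        have h3 : (1 - Real.cos ε) * c ≤ ε ^ 2 / 2 * c :=
          mul_le_mul_of_nonneg_right hcosb hcnn
        have h4 : ε ^ 2 / 2 * c < ε / 2 * m := by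
          have h5 := mul_lt_mul_of_pos_left hεm (by positivity : (0:ℝ) < ε / 2)
          calc ε ^ 2 / 2 * c = ε / 2 * (ε * c) := by ring
            _ < ε / 2 * m := h5
        linarith
      linarith [mul_pos (by linarith [ha i] : (0:ℝ) < 2 * a i) hkey]
  obtain ⟨x0, hx0Δ, hx0⟩ := himp
  have hMaglt : Mag a θ < Mag a (θ + Pi.single i x0) := by
    rw [hMagθ, hMagx x0, Complex.norm_def, Complex.norm_def]
    exact Real.sqrt_lt_sqrt (Complex.normSq_nonneg _) hx0
  -- assemble the open set
  have hcont : Continuous fun u : Fin N → ℝ => Mag a (θ + u) := by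
    have h1 : Continuous fun u : Fin N → ℝ =>
        ∑ j, (a j : ℂ) * Complex.exp ((((θ + u : Fin N → ℝ) j : ℝ) : ℂ) * Complex.I) := by
      apply continuous_finset_sum
      intro j _
      refine continuous_const.mul (Complex.continuous_exp.comp (Continuous.mul ?_ continuous_const))
      exact Complex.continuous_ofReal.comp (continuous_const.add (continuous_apply j))
    exact continuous_norm.comp h1
  set V : Set (Fin N → ℝ) :=
    (Set.pi Set.univ fun _ : Fin N => Set.Ioo (-Δ) Δ) ∩ {u | Mag a θ < Mag a (θ + u)} with hV
  have hVopen : IsOpen V := by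
    apply IsOpen.inter
    · exact isOpen_set_pi Set.finite_univ fun _ _ => isOpen_Ioo
    · exact isOpen_lt continuous_const hcont
  have hmem : Pi.single i x0 ∈ V := by
    constructor
    · intro j _
      by_cases hj : j = i
      · subst hj
        simp only [Pi.single_eq_same]
        exact ⟨by linarith [neg_abs_le x0], by linarith [le_abs_self x0]⟩
      · rw [Pi.single_eq_of_ne hj]
        exact ⟨by linarith, by linarith⟩
    · exact hMaglt
  refine ⟨V, hVopen, ?_, ?_, fun u hu => hu.2⟩
  · intro u hu j _
    exact Set.Ioo_subset_Icc_self (hu.1 j (Set.mem_univ j))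
  · exact hVopen.measure_pos volume ⟨Pi.single i x0, hmem⟩
end
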